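/- Let k∈C¹((0,∞);(0,∞)) be non-integrable on [0,∞) with k(t)→0 as t→∞, and suppose that for each T>0, sup_{0≤s≤T}|k(t+s)/k(t)−1|→0 and sup_{0≤s≤T}|k'(t+s)/k'(t)−1|→0 as t→∞. Define k₀(t)=k(t)sin(t). Then lim_{t→∞}∫_0^t k₀(s)ds exists and is finite, while ∫_0^t |k₀(s)|ds → +∞ as t→∞. -/

import Mathlib

open Real Filter MeasureTheory Set Topology

lemma aux_conv (k k' v v' : ℝ → ℝ)
    (hkd : ∀ t > 0, HasDerivAt k (k' t) t)
    (hk'c : ContinuousOn k' (Ioi 0))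
    (hk0 : Tendsto k atTop (𝓝 0))
    (hvd : ∀ x : ℝ, HasDerivAt v (v' x) x)
    (hv'c : Continuous v')
    (hvb : ∀ x, |v x| ≤ 1)
    (T₀ : ℝ) (hT₀ : 1 ≤ T₀) (hint : IntegrableOn k' (Ioi T₀)) :
    ∃ L, Tendsto (fun t => ∫ s in (1:ℝ)..t, k s * v' s) atTop (𝓝 L) := by
  have hT₀0 : (0:ℝ) < T₀ := lt_of_lt_of_le one_pos hT₀
  have hkc : ContinuousOn k (Ioi 0) := fun x hx => (hkd x hx).continuousAt.continuousWithinAt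
  have hvc : Continuous v := continuous_iff_continuousAt.2 fun x => (hvd x).continuousAt
  set g : ℝ → ℝ := fun s => k' s * v s with hg
  have hgc : ContinuousOn g (Ioi 0) := hk'c.mul hvc.continuousOn
  -- integrability of g on the tail
  have hg_int : IntegrableOn g (Ioi T₀) := by
    refine Integrable.mono' hint.abs
      ((hgc.mono fun x hx => lt_of_lt_of_le hT₀0 (le_of_lt hx)).aestronglyMeasurable
        measurableSet_Ioi) ?_
    filter_upwards with x
    simp only [hg, Real.norm_eq_abs, abs_mul]
    calc |k' x| * |v x| ≤ |k' x| * 1 := by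
          exact mul_le_mul_of_nonneg_left (hvb x) (abs_nonneg _)
      _ = |k' x| := mul_one _
  have h1 : Tendsto (fun t => ∫ s in T₀..t, g s) atTop (𝓝 (∫ s in Ioi T₀, g s)) :=
    intervalIntegral_tendsto_integral_Ioi T₀ hg_int tendsto_id
  have hII : ∀ a b : ℝ, 0 < a → 0 < b → IntervalIntegrable g volume a b := by
    intro a b ha hb
    exact (hgc.mono (fun x hx => lt_of_lt_of_le (lt_min ha hb) hx.1)).intervalIntegrable
  have h2 : Tendsto (fun t => ∫ s in (1:ℝ)..t, g s) atTop
      (𝓝 ((∫ s in (1:ℝ)..T₀, g s) + ∫ s in Ioi T₀, g s)) := by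
    refine Tendsto.congr' ?_ (h1.const_add (∫ s in (1:ℝ)..T₀, g s))
    filter_upwards [eventually_ge_atTop T₀] with t ht
    exact intervalIntegral.integral_add_adjacent_intervals (hII 1 T₀ one_pos hT₀0)
      (hII T₀ t hT₀0 (lt_of_lt_of_le hT₀0 ht))
  have hkv : Tendsto (fun t => k t * v t) atTop (𝓝 0) := by
    have hb : ∀ t, ‖k t * v t‖ ≤ |k t| := by
      intro t
      rw [Real.norm_eq_abs, abs_mul]
      calc |k t| * |v t| ≤ |k t| * 1 := mul_le_mul_of_nonneg_left (hvb t) (abs_nonneg _)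
        _ = |k t| := mul_one _
    exact squeeze_zero_norm hb (by simpa using hk0.abs)
  refine ⟨0 * v 0 - k 1 * v 1 - ((∫ s in (1:ℝ)..T₀, g s) + ∫ s in Ioi T₀, g s), ?_⟩
  have hmain : Tendsto (fun t => k t * v t - k 1 * v 1 - ∫ s in (1:ℝ)..t, g s) atTop
      (𝓝 (0 * v 0 - k 1 * v 1 - ((∫ s in (1:ℝ)..T₀, g s) + ∫ s in Ioi T₀, g s))) := by
    have : Tendsto (fun t => k t * v t) atTop (𝓝 (0 * v 0)) := by simpa using hkv
    exact (this.sub_const _).sub h2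
  refine Tendsto.congr' ?_ hmain
  filter_upwards [eventually_ge_atTop (1:ℝ)] with t ht
  have huIcc : uIcc (1:ℝ) t = Icc 1 t := uIcc_of_le ht
  have h0 : ∀ x ∈ uIcc (1:ℝ) t, (0:ℝ) < x := by
    intro x hx; rw [huIcc] at hx; exact lt_of_lt_of_le one_pos hx.1
  symm
  exact intervalIntegral.integral_mul_deriv_eq_deriv_mul
    (fun x hx => hkd x (h0 x hx)) (fun x _ => hvd x)
    ((hk'c.mono (fun x hx => h0 x hx)).intervalIntegrable)
    (hv'c.intervalIntegrable _ _)

lemma aux_T0 (k k' : ℝ → ℝ)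
    (hkpos : ∀ t > 0, 0 < k t)
    (hkd : ∀ t > 0, HasDerivAt k (k' t) t)
    (hk'c : ContinuousOn k' (Ioi 0))
    (hk0 : Tendsto k atTop (𝓝 0))
    (hunif' : ∀ T > 0, TendstoUniformlyOn (fun t s => k' (t + s) / k' t)
      (fun _ => 1) atTop (Icc 0 T)) :
    ∃ T₀ : ℝ, 1 ≤ T₀ ∧ IntegrableOn k' (Ioi T₀) := by
  have h := (Metric.tendstoUniformlyOn_iff.1 (hunif' 1 one_pos)) (1/2) (by norm_num)
  rw [eventually_atTop] at h
  obtain ⟨T₁, hT₁⟩ := h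
  set T₀ : ℝ := max T₁ 1 with hT₀def
  have hT₀1 : (1:ℝ) ≤ T₀ := le_max_right _ _
  have hT₀0 : (0:ℝ) < T₀ := lt_of_lt_of_le one_pos hT₀1
  -- k' nonzero on [T₀, ∞)
  have hne : ∀ t, T₀ ≤ t → k' t ≠ 0 := by
    intro t ht h0
    have := hT₁ t (le_trans (le_max_left _ _) ht) 0 (by constructor <;> norm_num)
    rw [add_zero, h0, div_zero] at this
    simp [Real.dist_eq] at this
    linarith
  -- constant sign by IVT
  have hivt : ∀ t, T₀ ≤ t → (0:ℝ) ∈ uIcc (k' T₀) (k' t) → False := by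
    intro t ht h0mem
    have hsub : uIcc T₀ t ⊆ Ioi (0:ℝ) := by
      rw [uIcc_of_le ht]
      exact fun x hx => lt_of_lt_of_le hT₀0 hx.1
    obtain ⟨c, hc1, hc2⟩ := intermediate_value_uIcc (hk'c.mono hsub) h0mem
    rw [uIcc_of_le ht] at hc1
    exact hne c hc1.1 hc2
  have hsign : (∀ t, T₀ ≤ t → 0 < k' t) ∨ (∀ t, T₀ ≤ t → k' t < 0) := by
    rcases lt_or_gt_of_ne (hne T₀ le_rfl) with h | h
    · right
      intro t ht
      by_contra hc
      push_neg at hc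
      have ht' : 0 < k' t := lt_of_le_of_ne hc (Ne.symm (hne t ht))
      exact hivt t ht (by rw [mem_uIcc]; left; exact ⟨le_of_lt h, le_of_lt ht'⟩)
    · left
      intro t ht
      by_contra hc
      push_neg at hc
      have ht' : k' t < 0 := lt_of_le_of_ne hc (hne t ht)
      exact hivt t ht (by rw [mem_uIcc]; right; exact ⟨le_of_lt ht', le_of_lt h⟩)
  -- positive sign impossible
  have hneg : ∀ t, T₀ ≤ t → k' t < 0 := by
    rcases hsign with hpos | hneg
    · exfalso
      -- k strictly increasing on [T₀,∞), contradicting k → 0 and k > 0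
      have hmono : ∀ t, T₀ + 1 ≤ t → k (T₀ + 1) ≤ k t := by
        intro t ht
        rcases eq_or_lt_of_le ht with rfl | hlt
        · exact le_rfl
        obtain ⟨c, hc, hceq⟩ := exists_hasDerivAt_eq_slope k k' hlt
          (fun x hx => ((hkd x (lt_of_lt_of_le hT₀0 (le_trans (by linarith) hx.1))).continuousAt).continuousWithinAt)
          (fun x hx => hkd x (lt_of_lt_of_le hT₀0 (by linarith [hx.1])))
        have h1 : 0 < k' c := hpos c (by linarith [hc.1])
        rw [hceq] at h1
        have h2 : 0 < t - (T₀ + 1) := by linarith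
        have h3 := mul_pos h1 h2
        rw [div_mul_cancel₀ _ (ne_of_gt h2)] at h3
        linarith
      have hlim : k (T₀ + 1) ≤ 0 := by
        have hev : ∀ᶠ t in atTop, k (T₀+1) ≤ k t := by
          filter_upwards [eventually_ge_atTop (T₀+1)] with t ht using hmono t ht
        exact ge_of_tendsto hk0 hev
      exact absurd hlim (not_le.2 (hkpos _ (by linarith)))
    · exact hneg
  refine ⟨T₀, hT₀1, ?_⟩
  exact integrableOn_Ioi_deriv_of_nonpos
    ((hkd T₀ hT₀0).continuousAt.continuousWithinAt)
    (fun x hx => hkd x (lt_of_lt_of_le hT₀0 (le_of_lt hx)))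
    (fun x hx => le_of_lt (hneg x (le_of_lt hx))) hk0

/-- If `k ∈ C¹((0,∞);(0,∞))` is non-integrable with `k(t) → 0` and
`k(t+s)/k(t) → 1`, `k'(t+s)/k'(t) → 1` uniformly on bounded windows, then the signed
integral `∫ k(s) sin(s) ds` converges while the absolute integral diverges. -/
theorem stmt12 (k k' : ℝ → ℝ)
    (hkpos : ∀ t > 0, 0 < k t)
    (hkd : ∀ t > 0, HasDerivAt k (k' t) t)
    (hk'c : ContinuousOn k' (Ioi 0))
    (hnonint : Tendsto (fun t => ∫ s in (1:ℝ)..t, k s) atTop atTop)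
    (hk0 : Tendsto k atTop (𝓝 0))
    (hunif : ∀ T > 0, TendstoUniformlyOn (fun t s => k (t + s) / k t)
      (fun _ => 1) atTop (Icc 0 T))
    (hunif' : ∀ T > 0, TendstoUniformlyOn (fun t s => k' (t + s) / k' t)
      (fun _ => 1) atTop (Icc 0 T)) :
    (∃ L, Tendsto (fun t => ∫ s in (1:ℝ)..t, k s * Real.sin s) atTop (𝓝 L)) ∧
    Tendsto (fun t => ∫ s in (1:ℝ)..t, |k s * Real.sin s|) atTop atTop := by
  obtain ⟨T₀, hT₀, hint⟩ := aux_T0 k k' hkpos hkd hk'c hk0 hunif'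
  have hkc : ContinuousOn k (Ioi 0) := fun x hx => (hkd x hx).continuousAt.continuousWithinAt
  -- Part 1: convergence, via v = -cos
  have hpart1 : ∃ L, Tendsto (fun t => ∫ s in (1:ℝ)..t, k s * Real.sin s) atTop (𝓝 L) := by
    refine aux_conv k k' (fun s => -Real.cos s) Real.sin hkd hk'c hk0 ?_ Real.continuous_sin ?_
      T₀ hT₀ hint
    · intro x
      have := (Real.hasDerivAt_cos x).neg
      rw [neg_neg] at this
      exact this
    · intro x
      rw [abs_neg]
      exact Real.abs_cos_le_one x
  refine ⟨hpart1, ?_⟩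
  -- Part 2: divergence. ∫ k cos(2s) converges, via v = sin(2s)/2
  have hpart2 : ∃ L2, Tendsto (fun t => ∫ s in (1:ℝ)..t, k s * Real.cos (2*s)) atTop (𝓝 L2) := by
    refine aux_conv k k' (fun s => Real.sin (2*s) / 2) (fun s => Real.cos (2*s)) hkd hk'c hk0
      ?_ (Real.continuous_cos.comp (continuous_const.mul continuous_id)) ?_ T₀ hT₀ hint
    · intro x
      have h1 : HasDerivAt (fun s : ℝ => Real.sin (2*s)) (Real.cos (2*x) * 2) x :=
        (Real.hasDerivAt_sin (2*x)).comp x (by simpa using (hasDerivAt_id x).const_mul (2:ℝ))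
      have := h1.div_const 2
      simpa [mul_div_assoc] using this
    · intro x
      rw [abs_div]
      have := Real.abs_sin_le_one (2*x)
      rw [abs_two]
      linarith
  obtain ⟨L2, hL2⟩ := hpart2
  -- lower bound function tends to atTop
  have hlow : Tendsto (fun t => (∫ s in (1:ℝ)..t, k s) / 2
      - (∫ s in (1:ℝ)..t, k s * Real.cos (2*s)) / 2) atTop atTop := by
    have h1 : Tendsto (fun t => (∫ s in (1:ℝ)..t, k s) / 2) atTop atTop :=
      hnonint.atTop_div_const two_pos
    have h2 : Tendsto (fun t => -((∫ s in (1:ℝ)..t, k s * Real.cos (2*s)) / 2)) atTop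
        (𝓝 (-(L2/2))) := ((hL2.div_const 2).neg)
    simpa [sub_eq_add_neg] using h1.atTop_add h2
  refine tendsto_atTop_mono' atTop ?_ hlow
  filter_upwards [eventually_ge_atTop (1:ℝ)] with t ht
  have hsub : uIcc (1:ℝ) t ⊆ Ioi (0:ℝ) := by
    rw [uIcc_of_le ht]
    exact fun x hx => lt_of_lt_of_le one_pos hx.1
  have hI1 : IntervalIntegrable k volume 1 t := (hkc.mono hsub).intervalIntegrable
  have hI2 : IntervalIntegrable (fun s => k s * Real.cos (2*s)) volume 1 t :=
    ((hkc.mono hsub).mul ((Real.continuous_cos.comp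
      (continuous_const.mul continuous_id)).continuousOn)).intervalIntegrable
  have hI3 : IntervalIntegrable (fun s => |k s * Real.sin s|) volume 1 t :=
    (((hkc.mono hsub).mul Real.continuous_sin.continuousOn).abs).intervalIntegrable
  have hIlow : IntervalIntegrable (fun s => k s / 2 - k s * Real.cos (2*s) / 2) volume 1 t :=
    (hI1.div_const 2).sub (hI2.div_const 2)
  have key : (∫ s in (1:ℝ)..t, (k s / 2 - k s * Real.cos (2*s) / 2))
      ≤ ∫ s in (1:ℝ)..t, |k s * Real.sin s| := by
    refine intervalIntegral.integral_mono_on ht hIlow hI3 ?_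
    intro s hs
    have hks : 0 < k s := hkpos s (lt_of_lt_of_le one_pos hs.1)
    have h1 : Real.cos (2*s) = 2 * Real.cos s ^ 2 - 1 := Real.cos_two_mul s
    have h2 : Real.sin s ^ 2 + Real.cos s ^ 2 = 1 := Real.sin_sq_add_cos_sq s
    have h3 : Real.sin s ^ 2 ≤ |Real.sin s| := by
      nlinarith [sq_abs (Real.sin s), abs_nonneg (Real.sin s), Real.abs_sin_le_one s]
    have h4 : |k s * Real.sin s| = k s * |Real.sin s| := by
      rw [abs_mul, abs_of_pos hks]
    nlinarith [mul_le_mul_of_nonneg_left h3 (le_of_lt hks)]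
  calc (∫ s in (1:ℝ)..t, k s) / 2 - (∫ s in (1:ℝ)..t, k s * Real.cos (2*s)) / 2
      = ∫ s in (1:ℝ)..t, (k s / 2 - k s * Real.cos (2*s) / 2) := by
        rw [intervalIntegral.integral_sub (hI1.div_const 2) (hI2.div_const 2),
          intervalIntegral.integral_div, intervalIntegral.integral_div]
    _ ≤ _ := key
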